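/- arXiv:1408.5448 — 2 statements merged into one kernel-verified Lean document; each statement's English description precedes it below -/
import Mathlib

section
/- Let n ≥ 1 lines in bounded general position, with a new line l added in general position, and let e be one of the new edges on l (a segment of l between two consecutive intersection points with the old lines). Then e crosses the interior of a bounded face of the old arrangement if and only if in the new arrangement e lies on the boundary of exactly two bounded faces; otherwise e lies on the boundary of exactly one bounded face of the new arrangement. -/
open Set

/-- A subset of the plane `ℂ ≅ ℝ²` is an (affine, real) line. -/
def IsLine (l : Set ℂ) : Prop :=
  ∃ a d : ℂ, d ≠ 0 ∧ l = {z : ℂ | ∃ t : ℝ, z = a + t • d}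

/-- `n` lines in the plane in (bounded) general position: each set is a line,
the lines are pairwise distinct, every two distinct lines meet in exactly one
point (no two are parallel), and no three distinct lines are concurrent.  All
intersections automatically lie in the affine plane. -/
def GenPos {n : ℕ} (ℓ : Fin n → Set ℂ) : Prop :=
  (∀ i, IsLine (ℓ i)) ∧ Function.Injective ℓ ∧
  (∀ i j, i ≠ j → ∃! p : ℂ, p ∈ ℓ i ∧ p ∈ ℓ j) ∧
  (∀ i j k : Fin n, i ≠ j → j ≠ k → i ≠ k →
    ∀ p : ℂ, ¬ (p ∈ ℓ i ∧ p ∈ ℓ j ∧ p ∈ ℓ k))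

/-- The vertices of the arrangement: points lying on at least two of the lines. -/
def Verts {n : ℕ} (ℓ : Fin n → Set ℂ) : Set ℂ :=
  {p : ℂ | ∃ i j, i ≠ j ∧ p ∈ ℓ i ∧ p ∈ ℓ j}

/-- An edge of the arrangement: a closed segment of one of the lines between two
vertices, containing no further vertex in its interior. -/
def IsEdge {n : ℕ} (ℓ : Fin n → Set ℂ) (e : Set ℂ) : Prop :=
  ∃ i : Fin n, ∃ v w : ℂ, v ≠ w ∧ v ∈ Verts ℓ ∧ w ∈ Verts ℓ ∧
    v ∈ ℓ i ∧ w ∈ ℓ i ∧ e = segment ℝ v w ∧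
    ∀ u ∈ Verts ℓ, u ∈ segment ℝ v w → u = v ∨ u = w

/-- A compact convex nonempty region whose boundary is a union of edges of the
arrangement belonging to pairwise distinct lines. -/
def PreAlcove {n : ℕ} (ℓ : Fin n → Set ℂ) (V : Set ℂ) : Prop :=
  IsCompact V ∧ Convex ℝ V ∧ V.Nonempty ∧
  ∃ E : Set (Set ℂ), (∀ e ∈ E, IsEdge ℓ e) ∧ frontier V = ⋃₀ E ∧
    ∀ e₁ ∈ E, ∀ e₂ ∈ E, ∀ i : Fin n, e₁ ⊆ ℓ i → e₂ ⊆ ℓ i → e₁ = e₂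

/-- An alcove: a `PreAlcove` containing no proper subset which is again a
`PreAlcove` (minimality). -/
def IsAlcove {n : ℕ} (ℓ : Fin n → Set ℂ) (V : Set ℂ) : Prop :=
  PreAlcove ℓ V ∧ ∀ W : Set ℂ, W ⊆ V → PreAlcove ℓ W → W = V

/-- A bounded face of the arrangement: a bounded connected component of the
complement of the union of the lines. -/
def IsBoundedFace {n : ℕ} (ℓ : Fin n → Set ℂ) (F : Set ℂ) : Prop :=
  ∃ x : ℂ, x ∉ (⋃ i, ℓ i) ∧ F = connectedComponentIn (⋃ i, ℓ i)ᶜ x ∧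
    Bornology.IsBounded F



section Helpers

open Bornology Filter

lemma isLine_functional {l : Set ℂ} (hl : IsLine l) :
    ∃ (ψ : ℂ →ₗ[ℝ] ℝ) (c : ℝ) (ν : ℂ), ψ ν = 1 ∧ l = {z | ψ z = c} := by
  obtain ⟨a, d, hd, rfl⟩ := hl
  set ψ : ℂ →ₗ[ℝ] ℝ :=
    (Complex.normSq d)⁻¹ • (Complex.imLm.comp
      ((LinearMap.mulRight ℂ (starRingEnd ℂ d)).restrictScalars ℝ)) with hψ
  have hns : (Complex.normSq d) ≠ 0 := (Complex.normSq_pos.2 hd).ne'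
  have hψz : ∀ z : ℂ, ψ z = (Complex.normSq d)⁻¹ * (z * (starRingEnd ℂ) d).im := by
    intro z; simp [hψ]
  refine ⟨ψ, ψ a, Complex.I * d, ?_, ?_⟩
  · rw [hψz]
    have : Complex.I * d * (starRingEnd ℂ) d = Complex.I * Complex.normSq d := by
      rw [mul_assoc, Complex.mul_conj]
    rw [this]
    simp [hns]
  · ext z
    simp only [Set.mem_setOf_eq]
    constructor
    · rintro ⟨t, rfl⟩
      rw [hψz, hψz]
      have : (a + t • d) * (starRingEnd ℂ) d = a * (starRingEnd ℂ) d + t • (Complex.normSq d : ℂ) := by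
        rw [add_mul, smul_mul_assoc, Complex.mul_conj]
      rw [this]
      simp [Complex.smul_re, Complex.smul_im]
    · intro hz
      have him : ((z - a) * (starRingEnd ℂ) d).im = 0 := by
        have : ψ (z - a) = 0 := by rw [map_sub, hz, sub_self]
        rw [hψz] at this
        field_simp at this
        simp only [Complex.mul_im, Complex.sub_re, Complex.sub_im, Complex.conj_re,
          Complex.conj_im] at this ⊢
        linarith
      refine ⟨((z - a) * (starRingEnd ℂ) d).re / Complex.normSq d, ?_⟩
      have hN : (Complex.normSq d : ℂ) ≠ 0 := by exact_mod_cast hns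
      have hu : (z - a) * (starRingEnd ℂ) d = (((z - a) * (starRingEnd ℂ) d).re : ℂ) := by
        apply Complex.ext <;> simp [him]
      have h2 : (z - a) * ((starRingEnd ℂ) d * d) = (((z - a) * (starRingEnd ℂ) d).re : ℂ) * d := by
        rw [← mul_assoc]; exact congrArg (· * d) hu
      have h3 : (starRingEnd ℂ) d * d = (Complex.normSq d : ℂ) := by
        rw [mul_comm, Complex.mul_conj]
      rw [h3] at h2
      have h4 : z - a = (((z - a) * (starRingEnd ℂ) d).re : ℂ) * d / (Complex.normSq d : ℂ) := by
        rw [eq_div_iff hN]; exact h2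
      rw [Complex.real_smul, Complex.ofReal_div, div_mul_eq_mul_div, ← h4]
      push_cast
      ring

/-- sign transfer -/
lemma sign_transfer {b k : ℝ} (h : 0 < b * k) (a : ℝ) : 0 < a * b ↔ 0 < a * k := by
  rcases mul_pos_iff.1 h with ⟨hb, hk⟩ | ⟨hb, hk⟩
  · constructor <;> intro hh
    · exact mul_pos ((mul_pos_iff.1 hh).resolve_right (fun ⟨_, h2⟩ => absurd hb (asymm h2)) |>.1) hk
    · exact mul_pos ((mul_pos_iff.1 hh).resolve_right (fun ⟨_, h2⟩ => absurd hk (asymm h2)) |>.1) hb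
  · constructor <;> intro hh
    · rcases mul_pos_iff.1 hh with ⟨h1, h2⟩ | ⟨h1, h2⟩
      · exact absurd hb (asymm h2)
      · exact mul_pos_of_neg_of_neg h1 hk
    · rcases mul_pos_iff.1 hh with ⟨h1, h2⟩ | ⟨h1, h2⟩
      · exact absurd hk (asymm h2)
      · exact mul_pos_of_neg_of_neg h1 hb

lemma convex_cellFactor (ψ : ℂ →ₗ[ℝ] ℝ) (c k : ℝ) : Convex ℝ {z | 0 < (ψ z - c) * k} := by
  intro z₁ h₁ z₂ h₂ a b ha hb hab
  simp only [mem_setOf_eq, map_add, map_smul] at *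
  have key : (a • ψ z₁ + b • ψ z₂ - c) * k = a * ((ψ z₁ - c) * k) + b * ((ψ z₂ - c) * k) := by
    simp only [smul_eq_mul]; linear_combination c * k * hab
  rw [key]
  rcases eq_or_lt_of_le ha with rfl | ha'
  · simp only [zero_mul, zero_add]
    have : b = 1 := by linarith
    rw [this]; linarith
  · nlinarith

lemma isOpen_cellFactor (ψ : ℂ →ₗ[ℝ] ℝ) (c k : ℝ) : IsOpen {z | 0 < (ψ z - c) * k} := by
  have : Continuous fun z => (ψ z - c) * k :=
    ((ψ.continuous_of_finiteDimensional).sub continuous_const).mul continuous_const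
  exact isOpen_lt continuous_const this

/-- The connected component of a point in the complement of a finite line
arrangement is the sign cell. -/
lemma cell_eq {m : ℕ} (L : Fin m → Set ℂ) (ψ : Fin m → ℂ →ₗ[ℝ] ℝ) (c : Fin m → ℝ)
    (hL : ∀ j, L j = {z | ψ j z = c j}) (x : ℂ) (hx : ∀ j, ψ j x ≠ c j) :
    connectedComponentIn (⋃ j, L j)ᶜ x
      = {z | ∀ j, 0 < (ψ j z - c j) * (ψ j x - c j)} := by
  set S := {z : ℂ | ∀ j, 0 < (ψ j z - c j) * (ψ j x - c j)} with hS
  have hxS : x ∈ S := fun j => by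
    exact mul_self_pos.2 (sub_ne_zero.2 (hx j))
  have hSsub : S ⊆ (⋃ j, L j)ᶜ := by
    intro z hz
    simp only [mem_compl_iff, mem_iUnion, not_exists]
    intro j hj
    rw [hL j] at hj
    have := hz j
    rw [mem_setOf_eq.mp hj, sub_self, zero_mul] at this
    exact lt_irrefl _ this
  have hSi : S = ⋂ j, {z | 0 < (ψ j z - c j) * (ψ j x - c j)} := by
    ext z; simp [hS, mem_iInter]
  have hconv : Convex ℝ S := hSi ▸ convex_iInter fun j => convex_cellFactor _ _ _
  have hopen : IsOpen S := hSi ▸ isOpen_iInter_of_finite fun j => isOpen_cellFactor _ _ _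
  apply subset_antisymm
  · -- component ⊆ S
    set T := {z : ℂ | ∃ j, (ψ j z - c j) * (ψ j x - c j) < 0} with hT
    have hTopen : IsOpen T := by
      have : T = ⋃ j, {z | 0 < (ψ j z - c j) * (-(ψ j x - c j))} := by
        ext z
        simp only [hT, mem_setOf_eq, mem_iUnion, mul_neg, neg_pos]
      rw [this]
      exact isOpen_iUnion fun j => isOpen_cellFactor _ _ _
    have hdisj : Disjoint S T := by
      rw [disjoint_left]
      rintro z hzS ⟨j, hj⟩
      exact absurd (hzS j) (asymm hj)
    have hsub : (⋃ j, L j)ᶜ ⊆ S ∪ T := by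
      intro z hz
      simp only [mem_compl_iff, mem_iUnion, not_exists] at hz
      by_cases hzS : z ∈ S
      · exact Or.inl hzS
      · refine Or.inr ?_
        simp only [hS, mem_setOf_eq, not_forall] at hzS
        obtain ⟨j, hj⟩ := hzS
        refine ⟨j, lt_of_le_of_ne (not_lt.1 hj) ?_⟩
        have h1 : ψ j z - c j ≠ 0 := by
          refine sub_ne_zero.2 fun hc => hz j ?_
          rw [hL j]; exact hc
        have h2 : ψ j x - c j ≠ 0 := sub_ne_zero.2 (hx j)
        exact mul_ne_zero h1 h2
    have hpre : IsPreconnected (connectedComponentIn (⋃ j, L j)ᶜ x) :=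
      isPreconnected_connectedComponentIn
    refine hpre.subset_left_of_subset_union hopen hTopen hdisj
      ((connectedComponentIn_subset _ _).trans hsub) ?_
    exact ⟨x, mem_connectedComponentIn (hSsub hxS), hxS⟩
  · exact hconv.isPreconnected.subset_connectedComponentIn hxS hSsub

lemma exists_ray {D : Set ℂ} (hD : Convex ℝ D) (hb : ¬ IsBounded D) {x : ℂ} (hx : x ∈ D) :
    ∃ d : ℂ, ‖d‖ = 1 ∧ ∀ t : ℝ, 0 ≤ t → x + t • d ∈ closure D := by
  have h1 : ∀ k : ℕ, ∃ y ∈ D, (k : ℝ) + 1 ≤ ‖y - x‖ := by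
    intro k
    by_contra hc
    push_neg at hc
    refine hb (isBounded_iff_forall_norm_le.2 ⟨(k : ℝ) + 1 + ‖x‖, fun y hy => ?_⟩)
    have := hc y hy
    have h2 : ‖y‖ - ‖x‖ ≤ ‖y - x‖ := by
      simpa using norm_sub_norm_le y x
    linarith
  choose u hu hnorm using h1
  have hne : ∀ k, u k - x ≠ 0 := fun k => by
    intro hc
    have := hnorm k
    rw [hc, norm_zero] at this
    have : (0:ℝ) ≤ k := Nat.cast_nonneg k
    linarith
  have hpos : ∀ k, (0:ℝ) < ‖u k - x‖ := fun k => norm_pos_iff.2 (hne k)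
  set dk : ℕ → ℂ := fun k => ‖u k - x‖⁻¹ • (u k - x) with hdk
  have hdksph : ∀ k, dk k ∈ Metric.sphere (0:ℂ) 1 := fun k => by
    simp only [Metric.mem_sphere, dist_zero_right, hdk, norm_smul, norm_inv, norm_norm]
    exact inv_mul_cancel₀ (hpos k).ne'
  obtain ⟨d, hdsph, φ, hφ, hφt⟩ := (isCompact_sphere (0:ℂ) 1).tendsto_subseq hdksph
  refine ⟨d, by simpa using hdsph, fun t ht => ?_⟩
  have hmem : ∀ᶠ k in atTop, x + t • dk (φ k) ∈ D := by
    filter_upwards [eventually_ge_atTop ⌈t⌉₊] with k hk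
    have htk : t ≤ ‖u (φ k) - x‖ := by
      have h3 : (k:ℝ) ≤ (φ k : ℝ) := by exact_mod_cast hφ.le_apply
      have h4 : t ≤ (⌈t⌉₊ : ℝ) := Nat.le_ceil t
      have h5 : ((⌈t⌉₊ : ℕ) : ℝ) ≤ (k : ℝ) := by exact_mod_cast hk
      have := hnorm (φ k)
      linarith
    have : x + t • dk (φ k) = x + (t * ‖u (φ k) - x‖⁻¹) • (u (φ k) - x) := by
      rw [hdk, smul_smul]
    rw [this]
    refine hD.add_smul_sub_mem hx (hu (φ k)) ⟨by positivity, ?_⟩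
    rw [mul_inv_le_iff₀ (hpos (φ k)), one_mul]
    exact htk
  refine mem_closure_of_tendsto ?_ hmem
  exact tendsto_const_nhds.add (hφt.const_smul t)

lemma ray_dir_nonneg {D : Set ℂ} (ψ : ℂ →ₗ[ℝ] ℝ) (c k : ℝ)
    (hsub : D ⊆ {z | 0 < (ψ z - c) * k}) {x d : ℂ}
    (hray : ∀ t : ℝ, 0 ≤ t → x + t • d ∈ closure D) : 0 ≤ ψ d * k := by
  have hcont : Continuous fun z : ℂ => (ψ z - c) * k :=
    ((ψ.continuous_of_finiteDimensional).sub continuous_const).mul continuous_const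
  have hclosed : IsClosed {z : ℂ | 0 ≤ (ψ z - c) * k} := isClosed_le continuous_const hcont
  have hcl : closure D ⊆ {z | 0 ≤ (ψ z - c) * k} := by
    apply closure_minimal _ hclosed
    intro z hz
    exact le_of_lt (show (0:ℝ) < (ψ z - c) * k from hsub hz)
  have key : ∀ t : ℝ, 0 ≤ t → 0 ≤ (ψ x - c) * k + t * (ψ d * k) := by
    intro t ht
    have := hcl (hray t ht)
    simp only [mem_setOf_eq, map_add, map_smul, smul_eq_mul] at this
    nlinarith [this]
  by_contra hneg
  push_neg at hneg
  have h0 := key 0 le_rfl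
  simp only [zero_mul, add_zero] at h0
  set t := ((ψ x - c) * k + 1) / (-(ψ d * k)) with hts
  have htpos : 0 ≤ t := div_nonneg (by linarith) (by linarith)
  have := key t htpos
  have hmul : t * (ψ d * k) = -((ψ x - c) * k + 1) := by
    have hM : ψ d * k ≠ 0 := hneg.ne
    rw [hts]; field_simp
    rw [div_self (by rwa [mul_comm] at hM : k * ψ d ≠ 0)]
  linarith [this, hmul]

lemma unbounded_of_ray {D : Set ℂ} {p d : ℂ} (hd : d ≠ 0)
    (h : ∀ t : ℝ, 0 ≤ t → p + t • d ∈ D) : ¬ IsBounded D := by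
  intro hb
  obtain ⟨C, hC⟩ := isBounded_iff_forall_norm_le.1 hb
  have hdpos : (0:ℝ) < ‖d‖ := norm_pos_iff.2 hd
  set t := (|C| + ‖p‖ + 1) / ‖d‖ with hts
  have ht : 0 ≤ t := by positivity
  have h1 := hC _ (h t ht)
  have h2 : ‖t • d‖ - ‖p‖ ≤ ‖p + t • d‖ := by
    have := norm_sub_norm_le (t • d) (-p)
    rw [sub_neg_eq_add, add_comm] at this
    have hp : ‖(-p : ℂ)‖ = ‖p‖ := norm_neg p
    linarith [this, hp.le, hp.ge]
  have h3 : ‖t • d‖ = t * ‖d‖ := by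
    rw [norm_smul, Real.norm_of_nonneg ht]
  have h4 : t * ‖d‖ = |C| + ‖p‖ + 1 := by
    rw [hts, div_mul_cancel₀ _ hdpos.ne']
  have h5 : C ≤ |C| := le_abs_self C
  linarith

end Helpers

section Main

open Bornology Filter

set_option maxHeartbeats 2000000 in
/-- Let `l = ℓ (Fin.last n)` be a new line added to `n` lines in bounded general
position, and let `e` be a new edge on `l` (a segment of `l` between consecutive
intersection points with the old lines).  Then `e` crosses the interior of a
bounded face of the old arrangement if and only if, in the new arrangement, `e`
lies on the boundary of exactly two bounded faces; otherwise `e` lies on the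
boundary of exactly one bounded face of the new arrangement. -/
theorem new_edge_bounded_faces (n : ℕ) (hn : 1 ≤ n)
    (ℓ : Fin (n + 1) → Set ℂ) (h : GenPos ℓ)
    (e : Set ℂ) (he : IsEdge ℓ e) (hel : e ⊆ ℓ (Fin.last n)) :
    ((∃ F : Set ℂ, IsBoundedFace (fun i : Fin n => ℓ i.castSucc) F ∧
        (e ∩ interior F).Nonempty) ↔
      {F : Set ℂ | IsBoundedFace ℓ F ∧ e ⊆ frontier F}.ncard = 2) ∧
    (¬ (∃ F : Set ℂ, IsBoundedFace (fun i : Fin n => ℓ i.castSucc) F ∧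
        (e ∩ interior F).Nonempty) →
      {F : Set ℂ | IsBoundedFace ℓ F ∧ e ⊆ frontier F}.ncard = 1) := by
  obtain ⟨hlines, hinj, hmeet, hconc⟩ := h
  choose ψ c ν hν hLeq using fun j => isLine_functional (hlines j)
  have hmem : ∀ j z, z ∈ ℓ j ↔ ψ j z = c j := fun j z => by rw [hLeq j]; rfl
  obtain ⟨i₀, v, w, hvw, hvV, hwV, _, _, heq, hmin⟩ := he
  subst heq
  set N : Fin (n+1) := Fin.last n with hN
  have hvN : v ∈ ℓ N := hel (left_mem_segment ℝ v w)
  have hwN : w ∈ ℓ N := hel (right_mem_segment ℝ v w)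
  have hcastne : ∀ a : Fin n, (a.castSucc : Fin (n+1)) ≠ N := fun a => (Fin.castSucc_lt_last a).ne
  -- each endpoint lies on an old line
  have exist_old : ∀ x : ℂ, x ∈ Verts ℓ → x ∈ ℓ N → ∃ a : Fin n, x ∈ ℓ a.castSucc := by
    rintro x ⟨i, j, hij, hxi, hxj⟩ hxN
    rcases eq_or_ne i N with rfl | hiN
    · obtain ⟨a, rfl⟩ := Fin.exists_castSucc_eq.2 (Ne.symm hij)
      exact ⟨a, hxj⟩
    · obtain ⟨a, rfl⟩ := Fin.exists_castSucc_eq.2 hiN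
      exact ⟨a, hxi⟩
  obtain ⟨a, hva⟩ := exist_old v hvV hvN
  obtain ⟨b, hwb⟩ := exist_old w hwV hwN
  have hab : a ≠ b := by
    rintro rfl
    obtain ⟨q, hq, hq!⟩ := hmeet a.castSucc N (hcastne a)
    exact hvw ((hq! v ⟨hva, hvN⟩).trans (hq! w ⟨hwb, hwN⟩).symm)
  -- open segment points avoid old lines
  have hop_not_old : ∀ x ∈ openSegment ℝ v w, ∀ i : Fin n, x ∉ ℓ i.castSucc := by
    intro x hx i hxi
    have hxseg : x ∈ segment ℝ v w := openSegment_subset_segment ℝ v w hx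
    have hxV : x ∈ Verts ℓ := ⟨i.castSucc, N, hcastne i, hxi, hel hxseg⟩
    rcases hmin x hxV hxseg with rfl | rfl
    · exact hvw (left_mem_openSegment_iff.1 hx)
    · exact hvw (right_mem_openSegment_iff.1 hx)
  -- midpoint
  set p : ℂ := (2⁻¹ : ℝ) • v + (2⁻¹ : ℝ) • w with hp
  have hpopen : p ∈ openSegment ℝ v w := ⟨2⁻¹, 2⁻¹, by norm_num, by norm_num, by norm_num, rfl⟩
  have hpseg : p ∈ segment ℝ v w := openSegment_subset_segment ℝ v w hpopen
  have hpN : ψ N p = c N := (hmem N p).1 (hel hpseg)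
  have hp_not_old : ∀ i : Fin n, ψ i.castSucc p ≠ c i.castSucc :=
    fun i hc => hop_not_old p hpopen i ((hmem _ p).2 hc)
  -- positivity of old signs on the open segment
  have hseg_pos : ∀ x ∈ openSegment ℝ v w, ∀ i : Fin n,
      0 < (ψ i.castSucc x - c i.castSucc) * (ψ i.castSucc p - c i.castSucc) := by
    intro x hx i
    have hxne : ψ i.castSucc x - c i.castSucc ≠ 0 :=
      sub_ne_zero.2 (fun hc => hop_not_old x hx i ((hmem _ x).2 hc))
    have hpne : ψ i.castSucc p - c i.castSucc ≠ 0 := sub_ne_zero.2 (hp_not_old i)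
    rcases lt_or_gt_of_ne (mul_ne_zero hxne hpne) with hlt | hgt
    · exfalso
      -- opposite signs: find a zero on the segment from x to p
      set f : ℝ → ℝ := fun t => ψ i.castSucc ((1 - t) • x + t • p) - c i.castSucc with hf
      have hfc : Continuous f := by
        apply Continuous.sub _ continuous_const
        exact (ψ i.castSucc).continuous_of_finiteDimensional.comp
          (((continuous_const.sub continuous_id).smul continuous_const).add
            (continuous_id.smul continuous_const))
      have hf0 : f 0 = ψ i.castSucc x - c i.castSucc := by simp [hf]
      have hf1 : f 1 = ψ i.castSucc p - c i.castSucc := by simp [hf]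
      have hzero : ∃ t ∈ Icc (0:ℝ) 1, f t = 0 := by
        rcases mul_neg_iff.1 hlt with ⟨h1, h2⟩ | ⟨h1, h2⟩
        · have : (0:ℝ) ∈ Icc (f 1) (f 0) := ⟨by rw [hf1]; linarith, by rw [hf0]; linarith⟩
          obtain ⟨t, ht, hft⟩ := intermediate_value_Icc' (by norm_num : (0:ℝ) ≤ 1)
            hfc.continuousOn this
          exact ⟨t, ht, hft⟩
        · have : (0:ℝ) ∈ Icc (f 0) (f 1) := ⟨by rw [hf0]; linarith, by rw [hf1]; linarith⟩
          obtain ⟨t, ht, hft⟩ := intermediate_value_Icc (by norm_num : (0:ℝ) ≤ 1)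
            hfc.continuousOn this
          exact ⟨t, ht, hft⟩
      obtain ⟨t, ht, hft⟩ := hzero
      have hyseg : (1 - t) • x + t • p ∈ openSegment ℝ v w :=
        convex_openSegment (𝕜 := ℝ) v w hx hpopen (by linarith [ht.2]) ht.1 (by ring)
      refine hop_not_old _ hyseg i ((hmem _ _).2 ?_)
      have : ψ i.castSucc ((1 - t) • x + t • p) - c i.castSucc = 0 := hft
      linarith
    · exact hgt
  set Gs : Set ℂ :=
    {z | ∀ i : Fin n, 0 < (ψ i.castSucc z - c i.castSucc) * (ψ i.castSucc p - c i.castSucc)}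
    with hGs
  have hGs_eq : Gs = ⋂ i : Fin n,
      {z | 0 < (ψ i.castSucc z - c i.castSucc) * (ψ i.castSucc p - c i.castSucc)} := by
    ext z; simp [hGs, mem_iInter]
  have hGconv : Convex ℝ Gs := hGs_eq ▸ convex_iInter fun i => convex_cellFactor _ _ _
  have hGopen : IsOpen Gs := hGs_eq ▸ isOpen_iInter_of_finite fun i => isOpen_cellFactor _ _ _
  have hpGs : p ∈ Gs := fun i => mul_self_pos.2 (sub_ne_zero.2 (hp_not_old i))
  have hGcell : connectedComponentIn (⋃ i : Fin n, ℓ i.castSucc)ᶜ p = Gs :=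
    cell_eq (fun i : Fin n => ℓ i.castSucc) (fun i => ψ i.castSucc) (fun i => c i.castSucc)
      (fun i => hLeq i.castSucc) p hp_not_old
  -- choose ε₀
  set nu : ℂ := ν N with hnu
  have hνN : ψ N nu = 1 := hν N
  obtain ⟨ε₀, hε₀, hP, hQ⟩ : ∃ ε₀ : ℝ, 0 < ε₀ ∧
      (∀ i : Fin n, 0 < (ψ i.castSucc (p + ε₀ • nu) - c i.castSucc) *
        (ψ i.castSucc p - c i.castSucc)) ∧
      (∀ i : Fin n, 0 < (ψ i.castSucc (p + (-ε₀) • nu) - c i.castSucc) *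
        (ψ i.castSucc p - c i.castSucc)) := by
    have hev : ∀ᶠ ε : ℝ in nhds 0, ∀ i : Fin n,
        0 < (ψ i.castSucc (p + ε • nu) - c i.castSucc) * (ψ i.castSucc p - c i.castSucc) := by
      rw [eventually_all]
      intro i
      have hcont : Continuous fun ε : ℝ =>
          (ψ i.castSucc (p + ε • nu) - c i.castSucc) * (ψ i.castSucc p - c i.castSucc) :=
        (((ψ i.castSucc).continuous_of_finiteDimensional.comp
          (continuous_const.add (continuous_id.smul continuous_const))).sub
          continuous_const).mul continuous_const
      have h0 : (0:ℝ) ∈ {ε : ℝ | 0 < (ψ i.castSucc (p + ε • nu) - c i.castSucc) *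
          (ψ i.castSucc p - c i.castSucc)} := by
        simp only [mem_setOf_eq, zero_smul, add_zero]
        exact hpGs i
      exact (isOpen_lt continuous_const hcont).eventually_mem h0
    obtain ⟨δ, hδ, hball⟩ := Metric.eventually_nhds_iff.1 hev
    have hd1 : dist (δ/2) (0:ℝ) < δ := by
      rw [Real.dist_eq, sub_zero, abs_of_pos (by linarith)]; linarith
    have hd2 : dist (-(δ/2)) (0:ℝ) < δ := by
      rw [Real.dist_eq, sub_zero, abs_of_neg (by linarith)]; linarith
    exact ⟨δ/2, by linarith, hball hd1, by simpa using hball hd2⟩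
  -- the two cells adjacent to the edge
  have hlastval : ∀ (ε : ℝ), ψ N (p + ε • nu) - c N = ε := by
    intro ε
    rw [map_add, map_smul, hνN, hpN]
    simp
  have cell_between : ∀ ε : ℝ, 0 < ε ∨ ε < 0 →
      (∀ i : Fin n, 0 < (ψ i.castSucc (p + ε • nu) - c i.castSucc) *
        (ψ i.castSucc p - c i.castSucc)) →
      connectedComponentIn (⋃ j, ℓ j)ᶜ (p + ε • nu)
        = Gs ∩ {z | 0 < (ψ N z - c N) * ε} := by
    intro ε hε hPε
    have hεne : ε ≠ 0 := by rcases hε with h | h; exacts [h.ne', h.ne]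
    have hynot : ∀ j, ψ j (p + ε • nu) ≠ c j := by
      intro j
      refine Fin.lastCases ?_ (fun i => ?_) j
      · exact fun hc => hεne (by rw [← hlastval ε, hc, sub_self])
      · exact sub_ne_zero.1 (left_ne_zero_of_mul (hPε i).ne')
    rw [cell_eq ℓ ψ c hLeq _ hynot]
    ext z
    simp only [mem_setOf_eq, mem_inter_iff, hGs]
    constructor
    · intro hz
      refine ⟨fun i => ?_, ?_⟩
      · exact (sign_transfer (hPε i) _).1 (hz i.castSucc)
      · have := hz N
        rwa [hlastval ε] at this
    · rintro ⟨hz1, hz2⟩ j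
      refine Fin.lastCases ?_ (fun i => ?_) j
      · rw [hlastval ε]
        exact hz2
      · exact (sign_transfer (hPε i) _).2 (hz1 i)
  -- sets and points on both sides of the new line
  have hnot_mem : ∀ z : ℂ, (∀ j, ψ j z ≠ c j) → z ∉ ⋃ j, ℓ j := by
    intro z hz hc
    obtain ⟨j, hj⟩ := mem_iUnion.1 hc
    exact hz j ((hmem j z).1 hj)
  set Hp : Set ℂ := Gs ∩ {z | 0 < (ψ N z - c N) * ε₀} with hHp
  set Hm : Set ℂ := Gs ∩ {z | 0 < (ψ N z - c N) * (-ε₀)} with hHm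
  set yp : ℂ := p + ε₀ • nu with hypdef
  set ym : ℂ := p + (-ε₀) • nu with hymdef
  have hcellp : connectedComponentIn (⋃ j, ℓ j)ᶜ yp = Hp := cell_between ε₀ (Or.inl hε₀) hP
  have hcellm : connectedComponentIn (⋃ j, ℓ j)ᶜ ym = Hm :=
    cell_between (-ε₀) (Or.inr (by linarith)) hQ
  have hypne : ∀ j, ψ j yp ≠ c j := by
    intro j
    refine Fin.lastCases ?_ (fun i => ?_) j
    · exact fun hc => hε₀.ne' (by rw [← hlastval ε₀, hc, sub_self])
    · exact sub_ne_zero.1 (left_ne_zero_of_mul (hP i).ne')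
  have hymne : ∀ j, ψ j ym ≠ c j := by
    intro j
    refine Fin.lastCases ?_ (fun i => ?_) j
    · exact fun hc => (neg_ne_zero.2 hε₀.ne') (by rw [← hlastval (-ε₀), hc, sub_self])
    · exact sub_ne_zero.1 (left_ne_zero_of_mul (hQ i).ne')
  have hypHp : yp ∈ Hp := by
    rw [← hcellp]; exact mem_connectedComponentIn (hnot_mem yp hypne)
  have hymHm : ym ∈ Hm := by
    rw [← hcellm]; exact mem_connectedComponentIn (hnot_mem ym hymne)
  have hHpconv : Convex ℝ Hp := hGconv.inter (convex_cellFactor (ψ N) (c N) ε₀)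
  have hHmconv : Convex ℝ Hm := hGconv.inter (convex_cellFactor (ψ N) (c N) (-ε₀))
  have hHpHm : Hp ≠ Hm := by
    intro hc
    have h1 := hypHp
    rw [hc] at h1
    have h2 : 0 < (ψ N yp - c N) * (-ε₀) := h1.2
    rw [hlastval ε₀] at h2
    nlinarith
  -- the edge lies on the frontier of both side cells
  have hfront : ∀ ε : ℝ, 0 < ε ∨ ε < 0 →
      segment ℝ v w ⊆ frontier (Gs ∩ {z | 0 < (ψ N z - c N) * ε}) := by
    intro ε hε
    have hHopen : IsOpen (Gs ∩ {z | 0 < (ψ N z - c N) * ε}) :=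
      hGopen.inter (isOpen_cellFactor _ _ _)
    have hdisj : ∀ x ∈ segment ℝ v w, x ∉ Gs ∩ {z | 0 < (ψ N z - c N) * ε} := by
      intro x hx hxH
      have hxc : ψ N x = c N := (hmem N x).1 (hel hx)
      have h2 := hxH.2
      rw [mem_setOf_eq, hxc, sub_self, zero_mul] at h2
      exact lt_irrefl _ h2
    have hclsub : openSegment ℝ v w ⊆ closure (Gs ∩ {z | 0 < (ψ N z - c N) * ε}) := by
      intro x hx
      have htend : Tendsto (fun t : ℝ => x + (t * ε) • nu) (nhdsWithin 0 (Ioi 0)) (nhds x) := by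
        have hco : Continuous fun t : ℝ => x + (t * ε) • nu :=
          continuous_const.add ((continuous_id.mul continuous_const).smul continuous_const)
        have := hco.tendsto 0
        simp only [zero_mul, zero_smul, add_zero] at this
        exact this.mono_left nhdsWithin_le_nhds
      refine mem_closure_of_tendsto htend ?_
      have hev2 : ∀ᶠ t : ℝ in nhdsWithin 0 (Ioi 0), ∀ i : Fin n,
          0 < (ψ i.castSucc (x + (t * ε) • nu) - c i.castSucc) *
            (ψ i.castSucc p - c i.castSucc) := by
        apply eventually_nhdsWithin_of_eventually_nhds
        rw [eventually_all]
        intro i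
        have hcont : Continuous fun t : ℝ =>
            (ψ i.castSucc (x + (t * ε) • nu) - c i.castSucc) *
              (ψ i.castSucc p - c i.castSucc) :=
          (((ψ i.castSucc).continuous_of_finiteDimensional.comp
            (continuous_const.add ((continuous_id.mul continuous_const).smul
              continuous_const))).sub continuous_const).mul continuous_const
        have h0 : (0:ℝ) ∈ {t : ℝ | 0 < (ψ i.castSucc (x + (t * ε) • nu) - c i.castSucc) *
            (ψ i.castSucc p - c i.castSucc)} := by
          simp only [mem_setOf_eq, zero_mul, zero_smul, add_zero]
          exact hseg_pos x hx i
        exact (isOpen_lt continuous_const hcont).eventually_mem h0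
      filter_upwards [hev2, self_mem_nhdsWithin] with t ht htpos
      refine ⟨ht, ?_⟩
      have hxc : ψ N x = c N := (hmem N x).1 (hel (openSegment_subset_segment ℝ v w hx))
      have hval : ψ N (x + (t * ε) • nu) - c N = t * ε := by
        rw [map_add, map_smul, hνN, hxc]; simp
      rw [mem_setOf_eq, hval]
      have htp : (0:ℝ) < t := htpos
      rcases hε with h | h
      · exact mul_pos (mul_pos htp h) h
      · exact mul_pos_of_neg_of_neg (mul_neg_of_pos_of_neg htp h) h
    intro x hx
    have hxcl : x ∈ closure (Gs ∩ {z | 0 < (ψ N z - c N) * ε}) := by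
      have h1 : segment ℝ v w = closure (openSegment ℝ v w) := (closure_openSegment v w).symm
      rw [h1] at hx
      exact closure_minimal hclsub isClosed_closure hx
    rw [hHopen.frontier_eq]
    exact ⟨hxcl, hdisj x hx⟩
  -- uniqueness: any bounded face of the new arrangement with e on its frontier is Hp or Hm
  have huniq : ∀ F : Set ℂ, IsBoundedFace ℓ F → segment ℝ v w ⊆ frontier F →
      F = Hp ∨ F = Hm := by
    rintro F ⟨x₀, hx₀, rfl, hFb⟩ hFf
    have hx₀ne : ∀ j, ψ j x₀ ≠ c j := by
      intro j hc
      exact hx₀ (mem_iUnion.2 ⟨j, (hmem j x₀).2 hc⟩)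
    rw [cell_eq ℓ ψ c hLeq x₀ hx₀ne] at hFf ⊢
    have hweakclosed : IsClosed {z : ℂ | ∀ j, 0 ≤ (ψ j z - c j) * (ψ j x₀ - c j)} := by
      have : {z : ℂ | ∀ j, 0 ≤ (ψ j z - c j) * (ψ j x₀ - c j)}
          = ⋂ j, {z | 0 ≤ (ψ j z - c j) * (ψ j x₀ - c j)} := by
        ext z; simp [mem_iInter]
      rw [this]
      refine isClosed_iInter fun j => isClosed_le continuous_const ?_
      exact (((ψ j).continuous_of_finiteDimensional).sub continuous_const).mul continuous_const
    have hpw : ∀ j, 0 ≤ (ψ j p - c j) * (ψ j x₀ - c j) := by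
      have h1 : p ∈ frontier {z : ℂ | ∀ j, 0 < (ψ j z - c j) * (ψ j x₀ - c j)} := hFf hpseg
      have h2 := frontier_subset_closure h1
      refine closure_minimal ?_ hweakclosed h2
      intro z hz j
      exact le_of_lt (hz j)
    have hold : ∀ i : Fin n,
        0 < (ψ i.castSucc x₀ - c i.castSucc) * (ψ i.castSucc p - c i.castSucc) := by
      intro i
      have h1 := hpw i.castSucc
      have h2 : ψ i.castSucc p - c i.castSucc ≠ 0 := sub_ne_zero.2 (hp_not_old i)
      have h3 : ψ i.castSucc x₀ - c i.castSucc ≠ 0 := sub_ne_zero.2 (hx₀ne i.castSucc)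
      rw [mul_comm] at h1
      exact lt_of_le_of_ne h1 (Ne.symm (mul_ne_zero h3 h2))
    have hkne : ψ N x₀ - c N ≠ 0 := sub_ne_zero.2 (hx₀ne N)
    rcases hkne.lt_or_gt with hk | hk
    · right
      ext z
      simp only [mem_setOf_eq, mem_inter_iff, hGs]
      constructor
      · intro hz
        refine ⟨fun i => (sign_transfer (hold i) _).1 (hz i.castSucc), ?_⟩
        have hbk : 0 < (ψ N x₀ - c N) * (-ε₀) := mul_pos_of_neg_of_neg hk (by linarith)
        exact (sign_transfer hbk _).1 (hz N)
      · rintro ⟨hz1, hz2⟩ j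
        refine Fin.lastCases ?_ (fun i => ?_) j
        · have hbk : 0 < (ψ N x₀ - c N) * (-ε₀) := mul_pos_of_neg_of_neg hk (by linarith)
          exact (sign_transfer hbk _).2 hz2
        · exact (sign_transfer (hold i) _).2 (hz1 i)
    · left
      ext z
      simp only [mem_setOf_eq, mem_inter_iff, hGs]
      constructor
      · intro hz
        refine ⟨fun i => (sign_transfer (hold i) _).1 (hz i.castSucc), ?_⟩
        have hbk : 0 < (ψ N x₀ - c N) * ε₀ := mul_pos hk hε₀
        exact (sign_transfer hbk _).1 (hz N)
      · rintro ⟨hz1, hz2⟩ j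
        refine Fin.lastCases ?_ (fun i => ?_) j
        · have hbk : 0 < (ψ N x₀ - c N) * ε₀ := mul_pos hk hε₀
          exact (sign_transfer hbk _).2 hz2
        · exact (sign_transfer (hold i) _).2 (hz1 i)
  -- key: a recession direction of the old cell is never parallel to the new line
  have hKey : ∀ d : ℂ, d ≠ 0 →
      (∀ i : Fin n, 0 ≤ ψ i.castSucc d * (ψ i.castSucc p - c i.castSucc)) → ψ N d ≠ 0 := by
    intro d hd hold hNd
    obtain ⟨a₀, d₀, hd₀, hrep⟩ := hlines N
    have hparam : ∀ z ∈ ℓ N, ∃ t : ℝ, z = a₀ + t • d₀ := by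
      intro z hz; rw [hrep] at hz; exact hz
    obtain ⟨tp, htp⟩ := hparam p (hel hpseg)
    have hpd : p + d ∈ ℓ N := (hmem N _).2 (by rw [map_add, hNd, hpN, add_zero])
    obtain ⟨t1, ht1⟩ := hparam _ hpd
    obtain ⟨tv, htv⟩ := hparam v hvN
    obtain ⟨tw, htw⟩ := hparam w hwN
    have hd_eq : d = (t1 - tp) • d₀ := by
      have : d = (p + d) - p := by ring
      rw [this, ht1, htp]
      module
    have ht1p : t1 - tp ≠ 0 := fun hc => hd (by rw [hd_eq, hc, zero_smul])
    have hvp : v = p + ((tv - tp)/(t1 - tp)) • d := by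
      rw [hd_eq, smul_smul, div_mul_cancel₀ _ ht1p, htv, htp]
      module
    have hwp : w = p + ((tw - tp)/(t1 - tp)) • d := by
      rw [hd_eq, smul_smul, div_mul_cancel₀ _ ht1p, htw, htp]
      module
    set rV : ℝ := (tv - tp)/(t1 - tp) with hrV
    set rW : ℝ := (tw - tp)/(t1 - tp) with hrW
    have hpv : p ≠ v := by
      intro hc
      rw [hc] at hpopen
      exact hvw (left_mem_openSegment_iff.1 hpopen)
    have hpw' : p ≠ w := by
      intro hc
      rw [hc] at hpopen
      exact hvw (right_mem_openSegment_iff.1 hpopen)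
    have hrV0 : rV ≠ 0 := fun hc => hpv (by rw [hvp, hc, zero_smul, add_zero])
    have hrW0 : rW ≠ 0 := fun hc => hpw' (by rw [hwp, hc, zero_smul, add_zero])
    obtain ⟨α, β, hα, hβ, hαβ, hsum⟩ := hpopen
    have hcomb : α * rV + β * rW = 0 := by
      have hm1 : α • v + β • w = (α + β) • p + (α * rV + β * rW) • d := by
        rw [hvp, hwp]; module
      rw [hαβ, one_smul, hsum] at hm1
      have hm2 : (α * rV + β * rW) • d = 0 := by
        have h4 := hm1.symm
        rw [add_eq_left] at h4
        exact h4
      exact (smul_eq_zero.1 hm2).resolve_right hd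
    have hcontra : ∀ i : Fin n, ∀ r : ℝ, 0 < r → p + r • d ∈ ℓ i.castSucc → False := by
      intro i r hr hmem'
      have hzero : ψ i.castSucc (p + r • d) = c i.castSucc := (hmem _ _).1 hmem'
      have hexp : ψ i.castSucc (p + r • d) - c i.castSucc
          = (ψ i.castSucc p - c i.castSucc) + r * ψ i.castSucc d := by
        rw [map_add, map_smul]; simp [smul_eq_mul]; ring
      have hsq : 0 < (ψ i.castSucc p - c i.castSucc) * (ψ i.castSucc p - c i.castSucc) :=
        mul_self_pos.2 (sub_ne_zero.2 (hp_not_old i))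
      have h1 := hold i
      have h2 : (ψ i.castSucc p - c i.castSucc) + r * ψ i.castSucc d = 0 := by
        rw [← hexp, hzero, sub_self]
      have h3 : ((ψ i.castSucc p - c i.castSucc) + r * ψ i.castSucc d) *
          (ψ i.castSucc p - c i.castSucc) = 0 := by rw [h2, zero_mul]
      nlinarith [h3, hsq, mul_nonneg hr.le h1]
    rcases lt_trichotomy rW 0 with hrw | hrw | hrw
    · have hrv : 0 < rV := by nlinarith
      exact hcontra a rV hrv (by rw [← hvp]; exact hva)
    · exact hrW0 hrw
    · exact hcontra b rW hrw (by rw [← hwp]; exact hwb)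
  -- A iff the old cell is bounded
  have hpnotold : p ∉ ⋃ i : Fin n, ℓ i.castSucc := by
    rw [mem_iUnion]
    rintro ⟨i, hi⟩
    exact hp_not_old i ((hmem _ p).1 hi)
  have hAiff : (∃ F : Set ℂ, IsBoundedFace (fun i : Fin n => ℓ i.castSucc) F ∧
      ((segment ℝ v w) ∩ interior F).Nonempty) ↔ IsBounded Gs := by
    constructor
    · rintro ⟨F, ⟨x₁, hx₁, rfl, hFb⟩, x, hxseg, hxint⟩
      have hxF : x ∈ connectedComponentIn (⋃ i, (fun i : Fin n => ℓ i.castSucc) i)ᶜ x₁ :=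
        interior_subset hxint
      have hxnot : x ∉ ⋃ i : Fin n, ℓ i.castSucc := connectedComponentIn_subset _ _ hxF
      have hxnot' : ∀ i : Fin n, x ∉ ℓ i.castSucc := by
        intro i hi
        exact hxnot (mem_iUnion.2 ⟨i, hi⟩)
      have hxop : x ∈ openSegment ℝ v w := by
        obtain ⟨α, β, hα, hβ, hαβ, rfl⟩ := hxseg
        rcases eq_or_lt_of_le hα with rfl | hα'
        · exfalso
          have hβ1 : β = 1 := by linarith
          refine hxnot' b ?_
          rw [hβ1, zero_smul, one_smul, zero_add]
          exact hwb
        rcases eq_or_lt_of_le hβ with rfl | hβ'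
        · exfalso
          have hα1 : α = 1 := by linarith
          refine hxnot' a ?_
          rw [hα1, zero_smul, one_smul, add_zero]
          exact hva
        exact ⟨α, β, hα', hβ', hαβ, rfl⟩
      have hcomp := connectedComponentIn_eq hxF
      have hxne : ∀ i : Fin n, ψ i.castSucc x ≠ c i.castSucc :=
        fun i hc => hxnot' i ((hmem _ x).2 hc)
      have hGx : connectedComponentIn (⋃ i : Fin n, ℓ i.castSucc)ᶜ x = Gs := by
        rw [cell_eq (fun i : Fin n => ℓ i.castSucc) (fun i => ψ i.castSucc)
          (fun i => c i.castSucc) (fun i => hLeq i.castSucc) x hxne]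
        ext z
        simp only [mem_setOf_eq, hGs]
        exact forall_congr' fun i => sign_transfer (hseg_pos x hxop i) _
      rw [hcomp, hGx] at hFb
      exact hFb
    · intro hGb
      refine ⟨Gs, ⟨p, hpnotold, hGcell.symm, hGb⟩, ⟨p, hpseg, ?_⟩⟩
      rw [hGopen.interior_eq]
      exact hpGs
  -- dichotomy when the old cell is unbounded
  have hdich : ¬ IsBounded Gs → (IsBounded Hp ∧ ¬ IsBounded Hm) ∨ (¬ IsBounded Hp ∧ IsBounded Hm) := by
    intro hGub
    obtain ⟨d, hdnorm, hdray⟩ := exists_ray hGconv hGub hpGs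
    have hdne : d ≠ 0 := fun hc => by rw [hc, norm_zero] at hdnorm; norm_num at hdnorm
    have hdold : ∀ i : Fin n, 0 ≤ ψ i.castSucc d * (ψ i.castSucc p - c i.castSucc) :=
      fun i => ray_dir_nonneg (ψ i.castSucc) (c i.castSucc) _
        (fun z hz => by rw [hGs] at hz; exact hz i) hdray
    have hdN : ψ N d ≠ 0 := hKey d hdne hdold
    have hnotboth : ¬ (¬ IsBounded Hp ∧ ¬ IsBounded Hm) := by
      rintro ⟨hub1, hub2⟩
      obtain ⟨d1, hd1n, hd1r⟩ := exists_ray hHpconv hub1 hypHp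
      obtain ⟨d2, hd2n, hd2r⟩ := exists_ray hHmconv hub2 hymHm
      have hd1ne : d1 ≠ 0 := fun hc => by rw [hc, norm_zero] at hd1n; norm_num at hd1n
      have hd2ne : d2 ≠ 0 := fun hc => by rw [hc, norm_zero] at hd2n; norm_num at hd2n
      have hd1old : ∀ i : Fin n, 0 ≤ ψ i.castSucc d1 * (ψ i.castSucc p - c i.castSucc) :=
        fun i => ray_dir_nonneg (ψ i.castSucc) (c i.castSucc) _
          (fun z hz => by rw [hHp] at hz; have h5 := hz.1; rw [hGs] at h5; exact h5 i) hd1r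
      have hd2old : ∀ i : Fin n, 0 ≤ ψ i.castSucc d2 * (ψ i.castSucc p - c i.castSucc) :=
        fun i => ray_dir_nonneg (ψ i.castSucc) (c i.castSucc) _
          (fun z hz => by rw [hHm] at hz; have h5 := hz.1; rw [hGs] at h5; exact h5 i) hd2r
      have hd1N : 0 ≤ ψ N d1 * ε₀ :=
        ray_dir_nonneg (ψ N) (c N) ε₀ (fun z hz => by rw [hHp] at hz; exact hz.2) hd1r
      have hd2N : 0 ≤ ψ N d2 * (-ε₀) :=
        ray_dir_nonneg (ψ N) (c N) (-ε₀) (fun z hz => by rw [hHm] at hz; exact hz.2) hd2r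
      have hd1Npos : 0 < ψ N d1 := by
        rcases (hKey d1 hd1ne hd1old).lt_or_gt with hlt | hgt
        · nlinarith
        · exact hgt
      have hd2Nneg : ψ N d2 < 0 := by
        rcases (hKey d2 hd2ne hd2old).lt_or_gt with hlt | hgt
        · exact hlt
        · nlinarith
      obtain ⟨ds, hds⟩ : ∃ ds : ℂ, ds = (-(ψ N d2)) • d1 + (ψ N d1) • d2 := ⟨_, rfl⟩
      have hdsN : ψ N ds = 0 := by
        rw [hds, map_add, map_smul, map_smul]
        simp only [smul_eq_mul]
        ring
      have hdsold : ∀ i : Fin n, 0 ≤ ψ i.castSucc ds * (ψ i.castSucc p - c i.castSucc) := by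
        intro i
        rw [hds, map_add, map_smul, map_smul]
        have h1 := hd1old i
        have h2 := hd2old i
        simp only [smul_eq_mul]
        nlinarith
      have hdsne : ds ≠ 0 := by
        intro hc
        have hcoef : ∀ i : Fin n, ψ i.castSucc d1 = 0 := by
          intro i
          have happ : (-(ψ N d2)) * ψ i.castSucc d1 + (ψ N d1) * ψ i.castSucc d2 = 0 := by
            have h3 := congrArg (ψ i.castSucc) (hds.symm.trans hc)
            rw [map_add, map_smul, map_smul, map_zero] at h3
            simpa using h3
          have h1 := hd1old i
          have h2 := hd2old i
          have hsne : ψ i.castSucc p - c i.castSucc ≠ 0 := sub_ne_zero.2 (hp_not_old i)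
          have hh : (-(ψ N d2)) * (ψ i.castSucc d1 * (ψ i.castSucc p - c i.castSucc))
              + (ψ N d1) * (ψ i.castSucc d2 * (ψ i.castSucc p - c i.castSucc)) = 0 := by
            linear_combination (ψ i.castSucc p - c i.castSucc) * happ
          have hz : ψ i.castSucc d1 * (ψ i.castSucc p - c i.castSucc) = 0 := by
            refine le_antisymm ?_ h1
            nlinarith [hh, mul_nonneg hd1Npos.le h2]
          rcases mul_eq_zero.1 hz with h | h
          · exact h
          · exact absurd h hsne
        obtain ⟨q, hq, hq!⟩ := hmeet a.castSucc b.castSucc (by simpa using hab)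
        have hq1 : q + d1 ∈ ℓ a.castSucc :=
          (hmem _ _).2 (by rw [map_add, hcoef a, add_zero, ← hmem]; exact hq.1)
        have hq2 : q + d1 ∈ ℓ b.castSucc :=
          (hmem _ _).2 (by rw [map_add, hcoef b, add_zero, ← hmem]; exact hq.2)
        have := (hq! (q + d1) ⟨hq1, hq2⟩).trans (hq! q hq).symm
        exact hd1ne (by linear_combination this)
      exact hKey ds hdsne hdsold hdsN
    have hrayside : ∀ (k : ℝ), 0 < ψ N d * k →
        ¬ IsBounded (Gs ∩ {z | 0 < (ψ N z - c N) * k}) := by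
      intro k hk
      apply unbounded_of_ray (p := p + d) (d := d) hdne
      intro t ht
      have heq2 : p + d + t • d = p + (1 + t) • d := by
        rw [add_smul, one_smul]; ring
      rw [heq2]
      refine ⟨?_, ?_⟩
      · rw [hGs]
        intro i
        have hexp : ψ i.castSucc (p + (1 + t) • d) - c i.castSucc
            = (ψ i.castSucc p - c i.castSucc) + (1 + t) * ψ i.castSucc d := by
          rw [map_add, map_smul]; simp [smul_eq_mul]; ring
        have h1 := hdold i
        have hsq : 0 < (ψ i.castSucc p - c i.castSucc) * (ψ i.castSucc p - c i.castSucc) :=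
          mul_self_pos.2 (sub_ne_zero.2 (hp_not_old i))
        rw [hexp]
        nlinarith
      · have hexp : ψ N (p + (1 + t) • d) - c N = (1 + t) * ψ N d := by
          rw [map_add, map_smul, hpN]; simp [smul_eq_mul]
        rw [mem_setOf_eq, hexp]
        nlinarith
    rcases hdN.lt_or_gt with hneg | hpos
    · have hmub : ¬ IsBounded Hm := by
        rw [hHm]
        exact hrayside (-ε₀) (by nlinarith)
      have hpb : IsBounded Hp := by
        by_contra hub
        exact hnotboth ⟨hub, hmub⟩
      exact Or.inl ⟨hpb, hmub⟩
    · have hpub : ¬ IsBounded Hp := by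
        rw [hHp]
        exact hrayside ε₀ (by nlinarith)
      have hmb : IsBounded Hm := by
        by_contra hub
        exact hnotboth ⟨hpub, hub⟩
      exact Or.inr ⟨hpub, hmb⟩
  -- the two counting statements
  have hP1 : IsBounded Gs →
      {F : Set ℂ | IsBoundedFace ℓ F ∧ segment ℝ v w ⊆ frontier F}.ncard = 2 := by
    intro hGb
    have hHpb : IsBounded Hp := hGb.subset inter_subset_left
    have hHmb : IsBounded Hm := hGb.subset inter_subset_left
    have hSS : {F : Set ℂ | IsBoundedFace ℓ F ∧ segment ℝ v w ⊆ frontier F} = {Hp, Hm} := by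
      ext F
      simp only [mem_setOf_eq, mem_insert_iff, mem_singleton_iff]
      constructor
      · rintro ⟨hF1, hF2⟩
        exact huniq F hF1 hF2
      · rintro (rfl | rfl)
        · exact ⟨⟨yp, hnot_mem yp hypne, hcellp.symm, hHpb⟩, hfront ε₀ (Or.inl hε₀)⟩
        · exact ⟨⟨ym, hnot_mem ym hymne, hcellm.symm, hHmb⟩,
            hfront (-ε₀) (Or.inr (by linarith))⟩
    rw [hSS]
    exact Set.ncard_pair hHpHm
  have hP2 : ¬ IsBounded Gs →
      {F : Set ℂ | IsBoundedFace ℓ F ∧ segment ℝ v w ⊆ frontier F}.ncard = 1 := by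
    intro hGub
    rcases hdich hGub with ⟨hb, hub⟩ | ⟨hub, hb⟩
    · have hSS : {F : Set ℂ | IsBoundedFace ℓ F ∧ segment ℝ v w ⊆ frontier F} = {Hp} := by
        ext F
        simp only [mem_setOf_eq, mem_singleton_iff]
        constructor
        · rintro ⟨⟨x₂, hx₂, hFeq, hFb⟩, hF2⟩
          rcases huniq F ⟨x₂, hx₂, hFeq, hFb⟩ hF2 with rfl | rfl
          · rfl
          · exact absurd hFb hub
        · rintro rfl
          exact ⟨⟨yp, hnot_mem yp hypne, hcellp.symm, hb⟩, hfront ε₀ (Or.inl hε₀)⟩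
      rw [hSS, Set.ncard_singleton]
    · have hSS : {F : Set ℂ | IsBoundedFace ℓ F ∧ segment ℝ v w ⊆ frontier F} = {Hm} := by
        ext F
        simp only [mem_setOf_eq, mem_singleton_iff]
        constructor
        · rintro ⟨⟨x₂, hx₂, hFeq, hFb⟩, hF2⟩
          rcases huniq F ⟨x₂, hx₂, hFeq, hFb⟩ hF2 with rfl | rfl
          · exact absurd hFb hub
          · rfl
        · rintro rfl
          exact ⟨⟨ym, hnot_mem ym hymne, hcellm.symm, hb⟩,
            hfront (-ε₀) (Or.inr (by linarith))⟩
      rw [hSS, Set.ncard_singleton]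
  refine ⟨⟨fun hA => hP1 (hAiff.1 hA), fun h2 => ?_⟩, fun hA => hP2 (fun hb => hA (hAiff.2 hb))⟩
  by_contra hA
  have h1 := hP2 (fun hb => hA (hAiff.2 hb))
  rw [h1] at h2
  norm_num at h2

end Main
end

section
/- Let L be a one-parameter linear system (pencil) of plane curves of degree n over an algebraically closed field, defined by f(x,y;t), whose generic member is irreducible and reduced. Then every one-dimensional irreducible component of the incidence variety F = {(t,z) : z ∈ Sing(C_t)} that dominates L is of the form L × {z₀} for a single point z₀ ∈ ℙ²; i.e., the moving singular points of a generically irreducible pencil are constant (base points of the singularities). -/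
noncomputable section AuxPencil

abbrev PencilR1 : Type := MvPolynomial (Fin 1) ℂ

noncomputable instance : NormalizationMonoid PencilR1 :=
  UniqueFactorizationMonoid.normalizationMonoid.toNormalizationMonoid

noncomputable instance : NormalizedGCDMonoid PencilR1 :=
  UniqueFactorizationMonoid.toNormalizedGCDMonoid PencilR1

abbrev PencilK1 : Type := FractionRing PencilR1

noncomputable instance pencilK1Field : Field PencilK1 := inferInstance
set_option synthInstance.maxHeartbeats 1000000 in
noncomputable instance pencilPolyCommRing : CommRing (Polynomial PencilK1) := inferInstance
set_option synthInstance.maxHeartbeats 1000000 in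
noncomputable instance pencilPolyED : EuclideanDomain (Polynomial PencilK1) := inferInstance
set_option synthInstance.maxHeartbeats 1000000 in
noncomputable instance pencilPolyBezout : IsBezout (Polynomial PencilK1) := inferInstance

lemma pencil_coeff_pderiv (i : Fin 2) (p : MvPolynomial (Fin 2) ℂ) (m : Fin 2 →₀ ℕ) :
    MvPolynomial.coeff m (MvPolynomial.pderiv i p)
      = ((m i + 1 : ℕ) : ℂ) * MvPolynomial.coeff (m + Finsupp.single i 1) p := by
  classical
  induction p using MvPolynomial.induction_on' with
  | monomial s a =>
    rw [MvPolynomial.pderiv_monomial, MvPolynomial.coeff_monomial, MvPolynomial.coeff_monomial]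
    by_cases hs : s = m + Finsupp.single i 1
    · subst hs
      have h1 : m + Finsupp.single i 1 - Finsupp.single i 1 = m := by
        ext j
        rw [Finsupp.tsub_apply, Finsupp.add_apply]
        omega
      have h2 : (m + Finsupp.single i 1 : Fin 2 →₀ ℕ) i = m i + 1 := by
        rw [Finsupp.add_apply, Finsupp.single_eq_same]
      rw [if_pos h1, if_pos rfl, h2]
      push_cast; ring
    · rw [if_neg hs, mul_zero]
      by_cases h2 : s - Finsupp.single i 1 = m
      · have h3 : ∀ j, s j - (Finsupp.single i 1 : Fin 2 →₀ ℕ) j = m j := fun j => by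
          rw [← Finsupp.tsub_apply, h2]
        have hsi : s i = 0 := by
          by_contra hne
          apply hs
          ext j
          rw [Finsupp.add_apply]
          have h4 := h3 j
          rcases eq_or_ne i j with rfl | hij
          · rw [Finsupp.single_eq_same] at h4 ⊢; omega
          · rw [Finsupp.single_eq_of_ne hij.symm] at h4 ⊢; omega
        rw [if_pos h2, hsi]
        simp
      · rw [if_neg h2]
  | add p q hp hq => simp only [map_add, MvPolynomial.coeff_add, hp, hq]; ring

lemma pencil_eq_C_of_pderiv_eq_zero {p : MvPolynomial (Fin 2) ℂ}
    (h0 : MvPolynomial.pderiv 0 p = 0) (h1 : MvPolynomial.pderiv 1 p = 0) :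
    p = MvPolynomial.C (MvPolynomial.coeff 0 p) := by
  ext m
  rcases eq_or_ne m 0 with rfl | hm
  · simp
  · rw [MvPolynomial.coeff_C, if_neg (Ne.symm hm)]
    obtain ⟨i, hi⟩ : ∃ i, m i ≠ 0 := by
      by_contra hall; push_neg at hall; exact hm (by ext j; simp [hall])
    have key := pencil_coeff_pderiv i p (m - Finsupp.single i 1)
    have hmm : m - Finsupp.single i 1 + Finsupp.single i 1 = m := by
      apply tsub_add_cancel_of_le
      rwa [Finsupp.single_le_iff, Nat.one_le_iff_ne_zero]
    rw [hmm] at key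
    have hz : MvPolynomial.pderiv i p = 0 := by fin_cases i <;> assumption
    rw [hz] at key
    simp only [MvPolynomial.coeff_zero] at key
    rcases mul_eq_zero.mp key.symm with h | h
    · exact absurd h (Nat.cast_ne_zero.mpr (by omega))
    · exact h

lemma pencil_finSuccEquiv_pderiv_zero (w : MvPolynomial (Fin 2) ℂ) :
    MvPolynomial.finSuccEquiv ℂ 1 (MvPolynomial.pderiv 0 w)
      = Polynomial.derivative (MvPolynomial.finSuccEquiv ℂ 1 w) := by
  induction w using MvPolynomial.induction_on with
  | C a =>
    rw [MvPolynomial.pderiv_C, map_zero]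
    rw [show (MvPolynomial.finSuccEquiv ℂ 1) (MvPolynomial.C a)
        = Polynomial.C (MvPolynomial.C a) by simp [MvPolynomial.finSuccEquiv_apply]]
    rw [Polynomial.derivative_C]
  | add p q hp hq => simp only [map_add, Polynomial.derivative_add, hp, hq]
  | mul_X p i hp =>
    rw [MvPolynomial.pderiv_mul, map_add, map_mul, map_mul, map_mul, hp]
    refine Fin.cases ?_ ?_ i
    · rw [MvPolynomial.pderiv_X_self, map_one, mul_one, MvPolynomial.finSuccEquiv_X_zero,
        Polynomial.derivative_mul, Polynomial.derivative_X, mul_one]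
    · intro j
      rw [MvPolynomial.pderiv_X_of_ne (Fin.succ_ne_zero j), map_zero, mul_zero, add_zero,
        MvPolynomial.finSuccEquiv_X_succ, Polynomial.derivative_mul, Polynomial.derivative_C,
        mul_zero, add_zero]

lemma pencil_exists_C_of_isUnit {w : MvPolynomial (Fin 2) ℂ} (hw : IsUnit w) :
    ∃ c : ℂ, c ≠ 0 ∧ w = MvPolynomial.C c := by
  have h1 : IsUnit (MvPolynomial.finSuccEquiv ℂ 1 w) := hw.map _
  rw [Polynomial.isUnit_iff] at h1
  obtain ⟨r, hr, hrw⟩ := h1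
  have h2 : IsUnit (MvPolynomial.finSuccEquiv ℂ 0 r) := hr.map _
  rw [Polynomial.isUnit_iff] at h2
  obtain ⟨r2, _, hrw2⟩ := h2
  obtain ⟨c, rfl⟩ := MvPolynomial.C_surjective (Fin 0) r2
  have hrc : r = MvPolynomial.C c := by
    apply (MvPolynomial.finSuccEquiv ℂ 0).injective
    rw [← hrw2]
    simp [MvPolynomial.finSuccEquiv_apply]
  subst hrc
  have hwC : w = MvPolynomial.C c := by
    apply (MvPolynomial.finSuccEquiv ℂ 1).injective
    rw [← hrw]
    simp [MvPolynomial.finSuccEquiv_apply]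
  refine ⟨c, ?_, hwC⟩
  rintro rfl
  rw [map_zero] at hwC
  exact hw.ne_zero hwC

lemma pencil_const_of_eval_vanish (d : PencilR1) (hd : d ≠ 0) (v : Polynomial ℂ) (S : Set ℂ)
    (hS : S.Infinite) (hvan : ∀ t ∈ S, MvPolynomial.eval ![Polynomial.eval t v] d = 0) :
    ∃ c, v = Polynomial.C c := by
  let ψ : MvPolynomial (Fin 1) ℂ ≃ₐ[ℂ] Polynomial ℂ :=
    (MvPolynomial.renameEquiv ℂ (Equiv.equivPUnit.{1, 1} (Fin 1))).trans (MvPolynomial.pUnitAlgEquiv ℂ)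
  have hψ : ∀ (e : PencilR1) (c : ℂ), Polynomial.eval c (ψ e) = MvPolynomial.eval ![c] e := by
    intro e c
    have h1 : (Polynomial.aeval c : Polynomial ℂ →ₐ[ℂ] ℂ).comp ψ.toAlgHom
        = MvPolynomial.aeval ![c] := by
      apply MvPolynomial.algHom_ext
      intro i
      fin_cases i
      simp [ψ]
    have h2 := DFunLike.congr_fun h1 e
    simpa [Polynomial.coe_aeval_eq_eval, MvPolynomial.coe_aeval_eq_eval] using h2
  have hD0 : ψ d ≠ 0 := fun hc => hd (ψ.injective (by rw [hc, map_zero]))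
  have hcomp : (ψ d).comp v = 0 := by
    apply Polynomial.eq_zero_of_infinite_isRoot
    apply hS.mono
    intro t ht
    simp only [Set.mem_setOf_eq, Polynomial.IsRoot, Polynomial.eval_comp]
    rw [hψ]
    exact hvan t ht
  rcases Polynomial.comp_eq_zero_iff.mp hcomp with h | h
  · exact absurd h hD0
  · exact ⟨_, h.2⟩

set_option maxHeartbeats 1000000 in
set_option synthInstance.maxHeartbeats 400000 in
lemma pencil_bez {P Q : Polynomial PencilR1} (hP : Irreducible P) (hPQ : ¬ P ∣ Q) (hQ : Q ≠ 0) :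
    ∃ (A B : Polynomial PencilR1) (d : PencilR1),
      d ≠ 0 ∧ A * P + B * Q = Polynomial.C d := by
  by_cases h0 : P.natDegree = 0
  · refine ⟨1, 0, P.coeff 0, ?_, ?_⟩
    · intro hc
      exact hP.ne_zero (by rw [Polynomial.eq_C_of_natDegree_eq_zero h0, hc, map_zero])
    · rw [one_mul, zero_mul, add_zero]
      exact Polynomial.eq_C_of_natDegree_eq_zero h0
  · have hprim : P.IsPrimitive := by
      intro r hr
      obtain ⟨s, hs⟩ := hr
      rcases hP.isUnit_or_isUnit hs with hu | hu
      · exact Polynomial.isUnit_C.mp hu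
      · exfalso
        apply h0
        have hds := Polynomial.natDegree_eq_zero_of_isUnit hu
        have : P.natDegree ≤ (Polynomial.C r).natDegree + s.natDegree := by
          conv_lhs => rw [hs]
          exact Polynomial.natDegree_mul_le
        simpa [hds] using this
    set φ := algebraMap PencilR1 PencilK1 with hφ
    have hinj : Function.Injective φ := IsFractionRing.injective PencilR1 PencilK1
    have hPbar : Irreducible (P.map φ) :=
      (Polynomial.IsPrimitive.irreducible_iff_irreducible_map_fraction_map hprim).mp hP
    have hnd : ¬ P.map φ ∣ Q.map φ := by
      intro hdvd
      apply hPQ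
      have hc0 : Q.content ≠ 0 := fun hc => hQ (Polynomial.content_eq_zero_iff.mp hc)
      have hu : IsUnit (Polynomial.C (φ Q.content)) := by
        rw [Polynomial.isUnit_C]
        exact (map_ne_zero_iff φ hinj |>.mpr hc0).isUnit
      have h1 : P.map φ ∣ (Q.primPart).map φ := by
        rw [Q.eq_C_content_mul_primPart, Polynomial.map_mul, Polynomial.map_C] at hdvd
        obtain ⟨w, hw⟩ := hu
        rw [← hw] at hdvd
        exact Units.dvd_mul_left.mp hdvd
      have h2 : P ∣ Q.primPart :=
        hprim.dvd_of_fraction_map_dvd_fraction_map h1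
      exact h2.trans Q.primPart_dvd
    have hcop : IsCoprime (P.map φ) (Q.map φ) := hPbar.coprime_iff_not_dvd.mpr hnd
    obtain ⟨a, b, hab⟩ := hcop
    obtain ⟨ca, hca⟩ := IsLocalization.integerNormalization_map_to_map
      (nonZeroDivisors PencilR1) a
    obtain ⟨cb, hcb⟩ := IsLocalization.integerNormalization_map_to_map
      (nonZeroDivisors PencilR1) b
    refine ⟨Polynomial.C (cb : PencilR1)
        * IsLocalization.integerNormalization (nonZeroDivisors PencilR1) a,
      Polynomial.C (ca : PencilR1)
        * IsLocalization.integerNormalization (nonZeroDivisors PencilR1) b,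
      (ca : PencilR1) * (cb : PencilR1), ?_, ?_⟩
    · exact mul_ne_zero (nonZeroDivisors.coe_ne_zero ca) (nonZeroDivisors.coe_ne_zero cb)
    · apply Polynomial.map_injective φ hinj
      rw [Polynomial.map_add, Polynomial.map_mul, Polynomial.map_mul, Polynomial.map_mul,
        Polynomial.map_mul, hca, hcb, Polynomial.map_C, Polynomial.map_C, Polynomial.map_C]
      rw [Algebra.smul_def, Algebra.smul_def, Polynomial.algebraMap_apply,
        Polynomial.algebraMap_apply, map_mul, Polynomial.C_mul]
      simp only [hφ]
      linear_combination (Polynomial.C (φ (ca : PencilR1)) * Polynomial.C (φ (cb : PencilR1))) * hab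

lemma pencil_half (p q : MvPolynomial (Fin 2) ℂ) (hp : Irreducible p) (hnd : ¬ p ∣ q)
    (hq : q ≠ 0) (u v : Polynomial ℂ) (S : Set ℂ) (hS : S.Infinite)
    (hvp : ∀ t ∈ S, MvPolynomial.eval ![Polynomial.eval t u, Polynomial.eval t v] p = 0)
    (hvq : ∀ t ∈ S, MvPolynomial.eval ![Polynomial.eval t u, Polynomial.eval t v] q = 0) :
    ∃ c, v = Polynomial.C c := by
  set E := MvPolynomial.finSuccEquiv ℂ 1 with hE
  have hP : Irreducible (E p) := (MulEquiv.irreducible_iff E.toMulEquiv).mpr hp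
  have hND : ¬ E p ∣ E q := by
    rintro ⟨w, hw⟩
    exact hnd ⟨E.symm w, by
      apply E.injective
      rw [map_mul, hw, AlgEquiv.apply_symm_apply]⟩
  have hQ : E q ≠ 0 := fun hc => hq (by
    have := congrArg E.symm hc
    simpa using this)
  obtain ⟨A, B, d, hd, habd⟩ := pencil_bez hP hND hQ
  refine pencil_const_of_eval_vanish d hd v S hS ?_
  intro t ht
  have hkey : ∀ w : MvPolynomial (Fin 2) ℂ,
      MvPolynomial.eval ![Polynomial.eval t u, Polynomial.eval t v] w
      = Polynomial.eval (Polynomial.eval t u)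
          ((E w).map (MvPolynomial.eval ![Polynomial.eval t v])) := by
    intro w
    exact MvPolynomial.eval_eq_eval_mv_eval' ![Polynomial.eval t v] (Polynomial.eval t u) w
  have happ := congrArg (fun W : Polynomial PencilR1 =>
    Polynomial.eval (Polynomial.eval t u)
      (W.map (MvPolynomial.eval ![Polynomial.eval t v]))) habd
  simp only [Polynomial.map_add, Polynomial.map_mul, Polynomial.map_C, Polynomial.eval_add,
    Polynomial.eval_mul, Polynomial.eval_C] at happ
  rw [← hkey p, ← hkey q, hvp t ht, hvq t ht, mul_zero, mul_zero, add_zero] at happ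
  exact happ.symm

lemma pencil_pair (p q : MvPolynomial (Fin 2) ℂ) (hp : Irreducible p) (hnd : ¬ p ∣ q)
    (hq : q ≠ 0) (u v : Polynomial ℂ) (S : Set ℂ) (hS : S.Infinite)
    (hvp : ∀ t ∈ S, MvPolynomial.eval ![Polynomial.eval t u, Polynomial.eval t v] p = 0)
    (hvq : ∀ t ∈ S, MvPolynomial.eval ![Polynomial.eval t u, Polynomial.eval t v] q = 0) :
    (∃ c, u = Polynomial.C c) ∧ (∃ c, v = Polynomial.C c) := by
  have hswap : ∀ (a b : ℂ) (w : MvPolynomial (Fin 2) ℂ),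
      MvPolynomial.eval ![a, b] (MvPolynomial.rename (⇑(Equiv.swap (0 : Fin 2) 1)) w)
        = MvPolynomial.eval ![b, a] w := by
    intro a b w
    rw [MvPolynomial.eval_rename]
    have hfe : (![a, b] ∘ ⇑(Equiv.swap (0 : Fin 2) 1)) = ![b, a] := by
      funext i; fin_cases i <;> simp
    rw [hfe]
  constructor
  · set σ : Fin 2 ≃ Fin 2 := Equiv.swap 0 1 with hσ
    have hirr' : Irreducible (MvPolynomial.rename (⇑σ) p) :=
      (MulEquiv.irreducible_iff (MvPolynomial.renameEquiv ℂ σ).toMulEquiv).mpr hp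
    have hnd' : ¬ MvPolynomial.rename (⇑σ) p ∣ MvPolynomial.rename (⇑σ) q := by
      rintro ⟨w, hw⟩
      apply hnd
      refine ⟨(MvPolynomial.renameEquiv ℂ σ).symm w, ?_⟩
      apply (MvPolynomial.renameEquiv ℂ σ).injective
      rw [map_mul, AlgEquiv.apply_symm_apply]
      exact hw
    have hq' : MvPolynomial.rename (⇑σ) q ≠ 0 := fun hc =>
      hq (MvPolynomial.rename_injective (⇑σ) σ.injective (by rw [hc, map_zero]))
    exact pencil_half (MvPolynomial.rename (⇑σ) p) (MvPolynomial.rename (⇑σ) q) hirr' hnd' hq'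
      v u S hS (fun t ht => by rw [hswap]; exact hvp t ht)
      (fun t ht => by rw [hswap]; exact hvq t ht)
  · exact pencil_half p q hp hnd hq u v S hS hvp hvq

lemma pencil_not_dvd_pderiv_zero {p : MvPolynomial (Fin 2) ℂ}
    (h : MvPolynomial.pderiv 0 p ≠ 0) : ¬ p ∣ MvPolynomial.pderiv 0 p := by
  intro hdv
  have hEd : MvPolynomial.finSuccEquiv ℂ 1 p
      ∣ MvPolynomial.finSuccEquiv ℂ 1 (MvPolynomial.pderiv 0 p) := by
    obtain ⟨m, hm⟩ := hdv
    exact ⟨MvPolynomial.finSuccEquiv ℂ 1 m, by rw [hm, map_mul]⟩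
  rw [pencil_finSuccEquiv_pderiv_zero] at hEd
  have hder0 : Polynomial.derivative (MvPolynomial.finSuccEquiv ℂ 1 p) ≠ 0 := by
    rw [← pencil_finSuccEquiv_pderiv_zero]
    exact fun hc => h ((MvPolynomial.finSuccEquiv ℂ 1).injective (by rw [hc, map_zero]))
  have hnat : (MvPolynomial.finSuccEquiv ℂ 1 p).natDegree ≠ 0 := fun hc =>
    hder0 (by rw [Polynomial.eq_C_of_natDegree_eq_zero hc, Polynomial.derivative_C])
  have hlt := Polynomial.natDegree_derivative_lt hnat
  have hle := Polynomial.natDegree_le_of_dvd hEd hder0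
  omega

lemma pencil_eval_aeval (u v : Polynomial ℂ) (w : MvPolynomial (Fin 2) ℂ) (t : ℂ) :
    Polynomial.eval t (MvPolynomial.aeval ![u, v] w)
      = MvPolynomial.eval ![Polynomial.eval t u, Polynomial.eval t v] w := by
  have h1 : (Polynomial.aeval t : Polynomial ℂ →ₐ[ℂ] ℂ).comp (MvPolynomial.aeval ![u, v])
      = MvPolynomial.aeval ![Polynomial.eval t u, Polynomial.eval t v] := by
    apply MvPolynomial.algHom_ext
    intro i
    fin_cases i <;> simp
  have h2 := DFunLike.congr_fun h1 w
  simpa [Polynomial.coe_aeval_eq_eval, MvPolynomial.coe_aeval_eq_eval] using h2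

lemma pencil_derivative_aeval (u v : Polynomial ℂ) (w : MvPolynomial (Fin 2) ℂ) :
    Polynomial.derivative (MvPolynomial.aeval ![u, v] w)
      = MvPolynomial.aeval ![u, v] (MvPolynomial.pderiv 0 w) * Polynomial.derivative u
        + MvPolynomial.aeval ![u, v] (MvPolynomial.pderiv 1 w) * Polynomial.derivative v := by
  induction w using MvPolynomial.induction_on with
  | C a => simp [MvPolynomial.pderiv_C]
  | add p q hp hq =>
    simp only [map_add, Polynomial.derivative_add, hp, hq]
    ring
  | mul_X p i hp =>
    refine Fin.cases ?_ (fun j => ?_) i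
    · rw [show MvPolynomial.pderiv (0 : Fin 2) (p * MvPolynomial.X 0)
          = MvPolynomial.pderiv 0 p * MvPolynomial.X 0 + p from by
        rw [MvPolynomial.pderiv_mul, MvPolynomial.pderiv_X_self, mul_one]]
      rw [show MvPolynomial.pderiv (1 : Fin 2) (p * MvPolynomial.X 0)
          = MvPolynomial.pderiv 1 p * MvPolynomial.X 0 from by
        rw [MvPolynomial.pderiv_mul, MvPolynomial.pderiv_X_of_ne (by decide : (0 : Fin 2) ≠ 1),
          mul_zero, add_zero]]
      rw [map_mul (MvPolynomial.aeval ![u, v]) p (MvPolynomial.X 0),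
        Polynomial.derivative_mul, hp, map_add,
        map_mul (MvPolynomial.aeval ![u, v]) (MvPolynomial.pderiv 0 p) (MvPolynomial.X 0),
        map_mul (MvPolynomial.aeval ![u, v]) (MvPolynomial.pderiv 1 p) (MvPolynomial.X 0)]
      simp only [MvPolynomial.aeval_X, Matrix.cons_val_zero]
      ring
    · obtain rfl : j = 0 := Subsingleton.elim j 0
      rw [show (0 : Fin 1).succ = (1 : Fin 2) from rfl]
      rw [show MvPolynomial.pderiv (1 : Fin 2) (p * MvPolynomial.X 1)
          = MvPolynomial.pderiv 1 p * MvPolynomial.X 1 + p from by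
        rw [MvPolynomial.pderiv_mul, MvPolynomial.pderiv_X_self, mul_one]]
      rw [show MvPolynomial.pderiv (0 : Fin 2) (p * MvPolynomial.X 1)
          = MvPolynomial.pderiv 0 p * MvPolynomial.X 1 from by
        rw [MvPolynomial.pderiv_mul, MvPolynomial.pderiv_X_of_ne (by decide : (1 : Fin 2) ≠ 0),
          mul_zero, add_zero]]
      rw [map_mul (MvPolynomial.aeval ![u, v]) p (MvPolynomial.X 1),
        Polynomial.derivative_mul, hp, map_add,
        map_mul (MvPolynomial.aeval ![u, v]) (MvPolynomial.pderiv 1 p) (MvPolynomial.X 1),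
        map_mul (MvPolynomial.aeval ![u, v]) (MvPolynomial.pderiv 0 p) (MvPolynomial.X 1)]
      simp only [MvPolynomial.aeval_X, Matrix.cons_val_one, Matrix.head_cons, Matrix.cons_val_zero]
      ring

end AuxPencil


/-- The point `z ∈ 𝔸²` is a singular point of the affine plane curve defined by
the polynomial `p`: the polynomial and both its partial derivatives vanish. -/
def SingAt (p : MvPolynomial (Fin 2) ℂ) (z : Fin 2 → ℂ) : Prop :=
  MvPolynomial.eval z p = 0 ∧
  MvPolynomial.eval z (MvPolynomial.pderiv 0 p) = 0 ∧
  MvPolynomial.eval z (MvPolynomial.pderiv 1 p) = 0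

/-- Moving singular points of a generically irreducible pencil are constant.
Let `C_t` be the pencil of plane curves of degree `n` cut out by
`f(x,y;t) = g + t·h`, whose generic member is irreducible (hence reduced).
Then any algebraic section `t ↦ (u(t), v(t))` of the incidence variety
`F = {(t,z) : z ∈ Sing(C_t)}` dominating the parameter line is constant; i.e.
every one-dimensional component of `F` dominating `L` is of the form
`L × {z₀}`. -/
theorem pencil_moving_singularities_constant (n : ℕ) (hn : 1 ≤ n)
    (g h : MvPolynomial (Fin 2) ℂ) (hh : h ≠ 0)
    (hdegg : g.totalDegree ≤ n) (hdegh : h.totalDegree ≤ n)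
    (hgen : {t : ℂ | ¬ Irreducible (g + MvPolynomial.C t * h)}.Finite)
    (u v : Polynomial ℂ)
    (hsec : ∀ t : ℂ, SingAt (g + MvPolynomial.C t * h) ![u.eval t, v.eval t]) :
    ∃ z₀ : Fin 2 → ℂ, ∀ t : ℂ, ![u.eval t, v.eval t] = z₀ := by
  classical
  have hEV := pencil_eval_aeval u v
  have hsec1 : ∀ t : ℂ, MvPolynomial.eval ![u.eval t, v.eval t] g
      + t * MvPolynomial.eval ![u.eval t, v.eval t] h = 0 := by
    intro t
    have h1 := (hsec t).1
    rwa [map_add, map_mul, MvPolynomial.eval_C] at h1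
  have hsec2 : ∀ j : Fin 2, ∀ t : ℂ,
      MvPolynomial.eval ![u.eval t, v.eval t] (MvPolynomial.pderiv j g)
      + t * MvPolynomial.eval ![u.eval t, v.eval t] (MvPolynomial.pderiv j h) = 0 := by
    intro j t
    have hj : MvPolynomial.eval ![u.eval t, v.eval t]
        (MvPolynomial.pderiv j (g + MvPolynomial.C t * h)) = 0 := by
      fin_cases j
      · exact (hsec t).2.1
      · exact (hsec t).2.2
    rwa [map_add, MvPolynomial.pderiv_C_mul, map_add, map_mul, MvPolynomial.eval_C] at hj
  have zeroPoly : ∀ (a b : MvPolynomial (Fin 2) ℂ),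
      (∀ t : ℂ, MvPolynomial.eval ![u.eval t, v.eval t] a
        + t * MvPolynomial.eval ![u.eval t, v.eval t] b = 0) →
      MvPolynomial.aeval ![u, v] a + Polynomial.X * MvPolynomial.aeval ![u, v] b = 0 := by
    intro a b hab
    apply Polynomial.eq_zero_of_infinite_isRoot
    have huniv : {x : ℂ | Polynomial.IsRoot
        (MvPolynomial.aeval ![u, v] a + Polynomial.X * MvPolynomial.aeval ![u, v] b) x}
        = Set.univ := by
      apply Set.eq_univ_of_forall
      intro t
      simp only [Set.mem_setOf_eq, Polynomial.IsRoot, Polynomial.eval_add, Polynomial.eval_mul,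
        Polynomial.eval_X, hEV]
      exact hab t
    rw [huniv]
    exact Set.infinite_univ
  have E0 := zeroPoly g h hsec1
  have E1 := zeroPoly _ _ (hsec2 0)
  have E2 := zeroPoly _ _ (hsec2 1)
  have E3 : Polynomial.derivative
      (MvPolynomial.aeval ![u, v] g + Polynomial.X * MvPolynomial.aeval ![u, v] h) = 0 := by
    rw [E0, Polynomial.derivative_zero]
  rw [Polynomial.derivative_add, Polynomial.derivative_mul, Polynomial.derivative_X, one_mul,
    pencil_derivative_aeval, pencil_derivative_aeval] at E3
  have hH : MvPolynomial.aeval ![u, v] h = 0 := by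
    linear_combination E3 - Polynomial.derivative u * E1 - Polynomial.derivative v * E2
  have hG : MvPolynomial.aeval ![u, v] g = 0 := by
    linear_combination E0 - Polynomial.X * hH
  have hgz : ∀ t : ℂ, MvPolynomial.eval ![u.eval t, v.eval t] g = 0 := fun t => by
    rw [← hEV g t, hG, Polynomial.eval_zero]
  have hhz : ∀ t : ℂ, MvPolynomial.eval ![u.eval t, v.eval t] h = 0 := fun t => by
    rw [← hEV h t, hH, Polynomial.eval_zero]
  suffices hfin : (∃ c, u = Polynomial.C c) ∧ (∃ c, v = Polynomial.C c) by
    obtain ⟨⟨cu, hcu⟩, cv, hcv⟩ := hfin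
    refine ⟨![cu, cv], fun t => ?_⟩
    rw [hcu, hcv]
    funext i
    fin_cases i <;> simp
  have hSgood : {t : ℂ | Irreducible (g + MvPolynomial.C t * h)}.Infinite := by
    have h1 := hgen.infinite_compl
    have h2 : {t : ℂ | ¬Irreducible (g + MvPolynomial.C t * h)}ᶜ
        = {t : ℂ | Irreducible (g + MvPolynomial.C t * h)} := by
      ext t; simp
    rwa [h2] at h1
  obtain ⟨t₀, ht₀⟩ := hSgood.nonempty
  have hirr₀ : Irreducible (g + MvPolynomial.C t₀ * h) := ht₀
  have hp₀z : ∀ t : ℂ,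
      MvPolynomial.eval ![u.eval t, v.eval t] (g + MvPolynomial.C t₀ * h) = 0 := by
    intro t
    rw [map_add, map_mul, MvPolynomial.eval_C, hgz, hhz]
    ring
  by_cases hdvd : (g + MvPolynomial.C t₀ * h) ∣ h
  · obtain ⟨t₁, ht₁i, ht₁ne⟩ : ∃ t₁ : ℂ, Irreducible (g + MvPolynomial.C t₁ * h) ∧ t₁ ≠ t₀ := by
      obtain ⟨t₁, ht₁⟩ := (hSgood.diff (Set.finite_singleton t₀)).nonempty
      exact ⟨t₁, ht₁.1, by simpa using ht₁.2⟩
    have hdg : (g + MvPolynomial.C t₀ * h) ∣ g := by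
      have h5 := dvd_sub (dvd_refl (g + MvPolynomial.C t₀ * h)) (hdvd.mul_left (MvPolynomial.C t₀))
      have h6 : g + MvPolynomial.C t₀ * h - MvPolynomial.C t₀ * h = g := by ring
      rwa [h6] at h5
    obtain ⟨w, hw⟩ : (g + MvPolynomial.C t₀ * h) ∣ (g + MvPolynomial.C t₁ * h) :=
      dvd_add hdg (hdvd.mul_left _)
    have hwu : IsUnit w := (ht₁i.isUnit_or_isUnit hw).resolve_left hirr₀.not_isUnit
    obtain ⟨c, hc0, rfl⟩ := pencil_exists_C_of_isUnit hwu
    have hne : t₁ - t₀ ≠ 0 := sub_ne_zero.mpr ht₁ne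
    obtain ⟨e, hhe⟩ : ∃ e : ℂ, h = MvPolynomial.C e * (g + MvPolynomial.C t₀ * h) := by
      refine ⟨(t₁ - t₀)⁻¹ * (c - 1), ?_⟩
      have h1 : MvPolynomial.C (t₁ - t₀) * h
          = (MvPolynomial.C c - 1) * (g + MvPolynomial.C t₀ * h) := by
        rw [map_sub]
        linear_combination hw
      have h2 := congrArg (fun x => MvPolynomial.C (t₁ - t₀)⁻¹ * x) h1
      rw [← mul_assoc, ← map_mul, inv_mul_cancel₀ hne, map_one, one_mul] at h2
      have hce : (MvPolynomial.C ((t₁ - t₀)⁻¹ * (c - 1)) : MvPolynomial (Fin 2) ℂ)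
          = MvPolynomial.C (t₁ - t₀)⁻¹ * (MvPolynomial.C c - 1) := by
        rw [map_mul, map_sub, map_one]
      linear_combination h2 - (g + MvPolynomial.C t₀ * h) * hce
    have he0 : e ≠ 0 := by
      intro h0
      apply hh
      rw [hhe, h0, map_zero, zero_mul]
    have hform : ∀ t : ℂ, g + MvPolynomial.C t * h
        = MvPolynomial.C ((1 - t₀ * e) + t * e) * (g + MvPolynomial.C t₀ * h) := by
      intro t
      have hcte : (MvPolynomial.C ((1 - t₀ * e) + t * e) : MvPolynomial (Fin 2) ℂ)
          = 1 - MvPolynomial.C t₀ * MvPolynomial.C e + MvPolynomial.C t * MvPolynomial.C e := by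
        rw [map_add, map_sub, map_one, map_mul, map_mul]
      rw [hcte]
      linear_combination (MvPolynomial.C t - MvPolynomial.C t₀) * hhe
    have hSp : {t : ℂ | (1 - t₀ * e) + t * e ≠ 0}.Infinite := by
      have hfin2 : {t : ℂ | (1 - t₀ * e) + t * e = 0}.Finite := by
        apply Set.Finite.subset (Set.finite_singleton (-((1 - t₀ * e) / e)))
        intro x hx
        simp only [Set.mem_setOf_eq] at hx
        simp only [Set.mem_singleton_iff]
        field_simp
        linear_combination hx
      have h3 := hfin2.infinite_compl
      have h4 : {t : ℂ | (1 - t₀ * e) + t * e = 0}ᶜ = {t : ℂ | (1 - t₀ * e) + t * e ≠ 0} := by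
        ext x; simp
      rwa [h4] at h3
    have hsing : ∀ t : ℂ, t ∈ {t : ℂ | (1 - t₀ * e) + t * e ≠ 0} →
        MvPolynomial.eval ![u.eval t, v.eval t]
          (MvPolynomial.pderiv 0 (g + MvPolynomial.C t₀ * h)) = 0
        ∧ MvPolynomial.eval ![u.eval t, v.eval t]
          (MvPolynomial.pderiv 1 (g + MvPolynomial.C t₀ * h)) = 0 := by
      intro t hta
      obtain ⟨h1, h2, h3⟩ := hsec t
      rw [hform t, MvPolynomial.pderiv_C_mul, map_mul, MvPolynomial.eval_C] at h2
      rw [hform t, MvPolynomial.pderiv_C_mul, map_mul, MvPolynomial.eval_C] at h3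
      exact ⟨(mul_eq_zero.mp h2).resolve_left hta, (mul_eq_zero.mp h3).resolve_left hta⟩
    by_cases hq0 : MvPolynomial.pderiv 0 (g + MvPolynomial.C t₀ * h) = 0
    · have hq1 : MvPolynomial.pderiv 1 (g + MvPolynomial.C t₀ * h) ≠ 0 := by
        intro hc
        have hCc := pencil_eq_C_of_pderiv_eq_zero hq0 hc
        rcases eq_or_ne (MvPolynomial.coeff 0 (g + MvPolynomial.C t₀ * h)) 0 with h00 | h00
        · rw [h00, map_zero] at hCc
          exact hirr₀.ne_zero hCc
        · exact hirr₀.not_isUnit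
            (hCc ▸ (h00.isUnit.map (MvPolynomial.C : ℂ →+* MvPolynomial (Fin 2) ℂ)))
      have hnd1 : ¬ (g + MvPolynomial.C t₀ * h)
          ∣ MvPolynomial.pderiv 1 (g + MvPolynomial.C t₀ * h) := by
        intro hdv
        have hsw : MvPolynomial.pderiv (0 : Fin 2)
            (MvPolynomial.rename (⇑(Equiv.swap (0 : Fin 2) 1)) (g + MvPolynomial.C t₀ * h))
            = MvPolynomial.rename (⇑(Equiv.swap (0 : Fin 2) 1))
              (MvPolynomial.pderiv 1 (g + MvPolynomial.C t₀ * h)) := by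
          have hsw2 := MvPolynomial.pderiv_rename (Equiv.swap (0 : Fin 2) 1).injective
            (1 : Fin 2) (g + MvPolynomial.C t₀ * h)
          rwa [show (Equiv.swap (0 : Fin 2) 1) 1 = 0 from Equiv.swap_apply_right 0 1] at hsw2
        apply pencil_not_dvd_pderiv_zero
          (p := MvPolynomial.rename (⇑(Equiv.swap (0 : Fin 2) 1)) (g + MvPolynomial.C t₀ * h))
        · rw [hsw]
          exact fun hc => hq1 (MvPolynomial.rename_injective _ (Equiv.swap (0 : Fin 2) 1).injective
            (by rw [hc, map_zero]))
        · rw [hsw]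
          obtain ⟨m, hm⟩ := hdv
          exact ⟨MvPolynomial.rename (⇑(Equiv.swap (0 : Fin 2) 1)) m, by rw [hm, map_mul]⟩
      exact pencil_pair _ _ hirr₀ hnd1 hq1 u v _ hSp (fun t _ => hp₀z t)
        (fun t ht => (hsing t ht).2)
    · have hnd0 := pencil_not_dvd_pderiv_zero hq0
      exact pencil_pair _ _ hirr₀ hnd0 hq0 u v _ hSp (fun t _ => hp₀z t)
        (fun t ht => (hsing t ht).1)
  · exact pencil_pair _ _ hirr₀ hdvd hh u v Set.univ Set.infinite_univ
      (fun t _ => hp₀z t) (fun t _ => hhz t)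
end
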